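/- For any integer r ≥ 2 and any r-graph H on a finite vertex set V (with |V| divisible by r) having at least one perfect matching, log Φ(H) ≤ (1/r)·∑_{v∈V} h(v,H), where h(v,H) denotes the base-e Shannon entropy of the edge containing v in a uniformly random perfect matching of H. -/

import Mathlib

open Finset

/-- The set of perfect matchings of the `r`-graph `H` on vertex set `V`. -/
def pmSet (V : Finset ℕ) (H : Finset (Finset ℕ)) : Finset (Finset (Finset ℕ)) :=
  H.powerset.filter (fun M => (∀ A ∈ M, ∀ B ∈ M, A ≠ B → A ∩ B = ∅) ∧ M.biUnion id = V)

/-- The number of perfect matchings of `H` (denoted `Φ(H)`). -/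
def pmCount (V : Finset ℕ) (H : Finset (Finset ℕ)) : ℕ := (pmSet V H).card

/-- `h(v,H)`: the base-`e` entropy of the edge containing `v` in a uniformly random
perfect matching of `H`.  The edge containing `v` equals `A` with probability
(number of perfect matchings containing `A`)/`Φ(H)`. -/
noncomputable def hEnt (V : Finset ℕ) (H : Finset (Finset ℕ)) (v : ℕ) : ℝ :=
  ∑ A ∈ H.filter (fun A => v ∈ A),
    Real.negMulLog ((((pmSet V H).filter (fun M => A ∈ M)).card : ℝ) / (pmCount V H : ℝ))

lemma mem_pmSet {V : Finset ℕ} {H : Finset (Finset ℕ)} {M : Finset (Finset ℕ)} :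
    M ∈ pmSet V H ↔ M ⊆ H ∧ (∀ A ∈ M, ∀ B ∈ M, A ≠ B → A ∩ B = ∅) ∧ M.biUnion id = V := by
  simp [pmSet, and_assoc]

lemma pm_card {r : ℕ} {V : Finset ℕ} {H : Finset (Finset ℕ)}
    (hH : ∀ A ∈ H, A.card = r) {M : Finset (Finset ℕ)} (hM : M ∈ pmSet V H) :
    r * M.card = V.card := by
  obtain ⟨hMH, hdisj, hbu⟩ := mem_pmSet.mp hM
  have h1 : V.card = ∑ A ∈ M, A.card := by
    rw [← hbu]
    exact card_biUnion (fun A hA B hB hne => disjoint_iff_inter_eq_empty.mpr (hdisj A hA B hB hne))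
  rw [h1, Finset.sum_congr rfl (fun A hA => hH A (hMH hA)), Finset.sum_const, smul_eq_mul,
    mul_comm]

lemma pm_unique_edge {V : Finset ℕ} {H : Finset (Finset ℕ)} {M : Finset (Finset ℕ)}
    (hM : M ∈ pmSet V H) {v : ℕ} (hv : v ∈ V) : ∃! A, A ∈ M ∧ v ∈ A := by
  obtain ⟨hMH, hdisj, hbu⟩ := mem_pmSet.mp hM
  rw [← hbu] at hv
  simp only [mem_biUnion, id] at hv
  obtain ⟨A, hA, hvA⟩ := hv
  refine ⟨A, ⟨hA, hvA⟩, ?_⟩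
  rintro B ⟨hB, hvB⟩
  by_contra hne
  have h2 := hdisj B hB A hA hne
  have h3 : v ∈ B ∩ A := mem_inter.mpr ⟨hvB, hvA⟩
  rw [h2] at h3
  exact absurd h3 (notMem_empty v)

lemma sum_c_eq {V : Finset ℕ} {H : Finset (Finset ℕ)} {v : ℕ} (hv : v ∈ V) :
    ∑ A ∈ H.filter (fun A => v ∈ A), ((pmSet V H).filter (fun M => A ∈ M)).card
      = pmCount V H := by
  calc ∑ A ∈ H.filter (fun A => v ∈ A), ((pmSet V H).filter (fun M => A ∈ M)).card
      = ∑ A ∈ H.filter (fun A => v ∈ A), ∑ M ∈ pmSet V H, if A ∈ M then 1 else 0 := by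
        exact Finset.sum_congr rfl fun A _ => Finset.card_filter _ _
    _ = ∑ M ∈ pmSet V H, ∑ A ∈ H.filter (fun A => v ∈ A), if A ∈ M then 1 else 0 :=
        Finset.sum_comm
    _ = ∑ M ∈ pmSet V H, 1 := by
        refine Finset.sum_congr rfl fun M hM => ?_
        rw [← Finset.card_filter]
        obtain ⟨A0, ⟨hA0M, hvA0⟩, huniq⟩ := pm_unique_edge hM hv
        have : (H.filter (fun A => v ∈ A)).filter (fun A => A ∈ M) = {A0} := by
          ext B
          simp only [mem_filter, mem_singleton]
          constructor
          · rintro ⟨⟨hBH, hvB⟩, hBM⟩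
            exact huniq B ⟨hBM, hvB⟩
          · rintro rfl
            exact ⟨⟨(mem_pmSet.mp hM).1 hA0M, hvA0⟩, hA0M⟩
        rw [this, card_singleton]
    _ = pmCount V H := by simp [pmCount]

lemma count_key (r : ℕ) (hr : 2 ≤ r) (V : Finset ℕ) (H : Finset (Finset ℕ))
    (hH : ∀ A ∈ H, A ⊆ V ∧ A.card = r) :
    ∀ n : ℕ, ∀ V' : Finset ℕ, V' ⊆ V → V'.card = n →
      ∑ M ∈ pmSet V' (H.filter (fun A => A ⊆ V')),
          ∏ A ∈ M, ((pmSet V H).filter (fun M' => A ∈ M')).card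
        ≤ (pmCount V H) ^ (n / r) := by
  intro n
  induction n using Nat.strong_induction_on with
  | _ n ih =>
  intro V' hV'V hcard
  set c : Finset ℕ → ℕ := fun A => ((pmSet V H).filter (fun M' => A ∈ M')).card with hcdef
  set H' := H.filter (fun A => A ⊆ V') with hH'def
  by_cases hemp : pmSet V' H' = ∅
  · simp [hemp]
  obtain ⟨M0, hM0⟩ := Finset.nonempty_iff_ne_empty.mpr hemp
  have hH'card : ∀ A ∈ H', A.card = r := fun A hA => (hH A (mem_filter.mp hA).1).2
  have hn : r * M0.card = n := by rw [← hcard]; exact pm_card hH'card hM0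
  rcases Nat.eq_zero_or_pos n with h0 | hpos
  · -- n = 0 : every matching must be empty
    have hsub : pmSet V' H' ⊆ {∅} := by
      intro M hM
      obtain ⟨hMH, hdisj, hbu⟩ := mem_pmSet.mp hM
      simp only [mem_singleton]
      by_contra hne
      obtain ⟨A, hA⟩ := Finset.nonempty_iff_ne_empty.mpr hne
      have hAcard := hH'card A (hMH hA)
      have hAsub : A ⊆ V' := by
        rw [← hbu]; intro x hx; exact mem_biUnion.mpr ⟨A, hA, hx⟩
      have : V' = ∅ := Finset.card_eq_zero.mp (hcard.trans h0)
      rw [this, Finset.subset_empty] at hAsub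
      rw [hAsub] at hAcard
      simp at hAcard
      omega
    calc ∑ M ∈ pmSet V' H', ∏ A ∈ M, c A
        ≤ ∑ M ∈ ({∅} : Finset (Finset (Finset ℕ))), ∏ A ∈ M, c A :=
          Finset.sum_le_sum_of_subset hsub
      _ = 1 := by simp
      _ ≤ (pmCount V H) ^ (n / r) := by
          subst h0; simp
  · -- n > 0
    have hV'ne : V'.Nonempty := by rw [← Finset.card_pos, hcard]; exact hpos
    obtain ⟨v0, hv0⟩ := hV'ne
    obtain ⟨k, hk, hk1⟩ : ∃ k, n = r * (k + 1) ∧ M0.card = k + 1 := by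
      have : M0.card ≠ 0 := by
        intro h; rw [h, Nat.mul_zero] at hn; omega
      refine ⟨M0.card - 1, ?_, by omega⟩
      rw [Nat.sub_add_cancel (by omega : 1 ≤ M0.card)]
      exact hn.symm
    -- partition the matchings by the edge containing v0
    have hpart : pmSet V' H' =
        (H'.filter (fun A => v0 ∈ A)).biUnion
          (fun A => (pmSet V' H').filter (fun M => A ∈ M)) := by
      ext M
      simp only [mem_biUnion, mem_filter]
      constructor
      · intro hM
        obtain ⟨A, ⟨hAM, hvA⟩, _⟩ := pm_unique_edge hM hv0
        exact ⟨A, ⟨(mem_pmSet.mp hM).1 hAM, hvA⟩, hM, hAM⟩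
      · rintro ⟨A, _, hM, _⟩; exact hM
    have hdisjfib : (↑(H'.filter (fun A => v0 ∈ A)) : Set (Finset ℕ)).PairwiseDisjoint
        (fun A => (pmSet V' H').filter (fun M => A ∈ M)) := by
      intro A hA B hB hne
      simp only [Finset.coe_filter, Set.mem_setOf_eq] at hA hB
      refine Finset.disjoint_left.mpr ?_
      intro M hMA hMB
      obtain ⟨hM1, hAM⟩ := mem_filter.mp hMA
      obtain ⟨_, hBM⟩ := mem_filter.mp hMB
      obtain ⟨C, _, huniq⟩ := pm_unique_edge hM1 hv0
      exact hne ((huniq A ⟨hAM, hA.2⟩).trans (huniq B ⟨hBM, hB.2⟩).symm)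
    rw [hpart, Finset.sum_biUnion hdisjfib]
    -- per-fiber computation
    have hfib : ∀ A ∈ H'.filter (fun A => v0 ∈ A),
        ∑ M ∈ (pmSet V' H').filter (fun M => A ∈ M), ∏ B ∈ M, c B
          = c A * ∑ M' ∈ pmSet (V' \ A) (H.filter (fun B => B ⊆ V' \ A)), ∏ B ∈ M', c B := by
      intro A hA
      obtain ⟨hAH', hv0A⟩ := mem_filter.mp hA
      obtain ⟨hAH, hAV'⟩ := mem_filter.mp hAH'
      have hAne : A.Nonempty := by
        rw [← Finset.card_pos, (hH A hAH).2]; omega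
      rw [Finset.mul_sum]
      refine Finset.sum_bij' (fun M _ => M.erase A) (fun M' _ => insert A M') ?_ ?_ ?_ ?_ ?_
      · -- erase lands in pmSet (V' \ A)
        intro M hM
        obtain ⟨hMpm, hAM⟩ := mem_filter.mp hM
        obtain ⟨hMH, hdisj, hbu⟩ := mem_pmSet.mp hMpm
        refine mem_pmSet.mpr ⟨?_, ?_, ?_⟩
        · intro B hB
          obtain ⟨hBne, hBM⟩ := mem_erase.mp hB
          refine mem_filter.mpr ⟨(mem_filter.mp (hMH hBM)).1, ?_⟩
          intro x hx
          refine mem_sdiff.mpr ⟨(mem_filter.mp (hMH hBM)).2 hx, ?_⟩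
          intro hxA
          have h6 := hdisj B hBM A hAM hBne
          have h7 : x ∈ B ∩ A := mem_inter.mpr ⟨hx, hxA⟩
          rw [h6] at h7
          exact notMem_empty x h7
        · intro B hB C hC hne
          exact hdisj B (mem_erase.mp hB).2 C (mem_erase.mp hC).2 hne
        · ext x
          simp only [mem_biUnion, mem_erase, id, mem_sdiff]
          constructor
          · rintro ⟨B, ⟨hBne, hBM⟩, hxB⟩
            refine ⟨by rw [← hbu]; exact mem_biUnion.mpr ⟨B, hBM, hxB⟩, ?_⟩
            intro hxA
            have h5 := hdisj B hBM A hAM hBne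
            have h7 : x ∈ B ∩ A := mem_inter.mpr ⟨hxB, hxA⟩
            rw [h5] at h7
            exact notMem_empty x h7
          · rintro ⟨hxV', hxA⟩
            rw [← hbu] at hxV'
            obtain ⟨B, hBM, hxB⟩ := mem_biUnion.mp hxV'
            exact ⟨B, ⟨fun h => hxA (h ▸ hxB), hBM⟩, hxB⟩
      · -- insert lands in the fiber
        intro M' hM'
        obtain ⟨hM'H, hdisj, hbu⟩ := mem_pmSet.mp hM'
        have hAnotin : A ∉ M' := by
          intro hAin
          have : A ⊆ M'.biUnion id := fun x hx => mem_biUnion.mpr ⟨A, hAin, hx⟩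
          rw [hbu] at this
          obtain ⟨x, hx⟩ := hAne
          exact (mem_sdiff.mp (this hx)).2 hx
        refine mem_filter.mpr ⟨mem_pmSet.mpr ⟨?_, ?_, ?_⟩, mem_insert_self A M'⟩
        · intro B hB
          rcases mem_insert.mp hB with rfl | hBM'
          · exact hAH'
          · have := mem_filter.mp (hM'H hBM')
            exact mem_filter.mpr ⟨this.1, this.2.trans (Finset.sdiff_subset)⟩
        · intro B hB C hC hne
          have hsd : ∀ D ∈ M', D ∩ A = ∅ := by
            intro D hD
            have hDsub := (mem_filter.mp (hM'H hD)).2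
            ext x
            simp only [mem_inter, notMem_empty, iff_false]
            rintro ⟨hxD, hxA⟩
            exact (mem_sdiff.mp (hDsub hxD)).2 hxA
          rcases mem_insert.mp hB with rfl | hBM' <;> rcases mem_insert.mp hC with rfl | hCM'
          · exact absurd rfl hne
          · rw [Finset.inter_comm]; exact hsd C hCM'
          · exact hsd B hBM'
          · exact hdisj B hBM' C hCM' hne
        · rw [Finset.biUnion_insert, hbu]
          simpa using Finset.union_sdiff_of_subset hAV'
      · -- left inverse
        intro M hM
        exact Finset.insert_erase (mem_filter.mp hM).2
      · -- right inverse
        intro M' hM'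
        refine Finset.erase_insert ?_
        intro hAin
        have hbu := (mem_pmSet.mp hM').2.2
        have : A ⊆ M'.biUnion id := fun x hx => mem_biUnion.mpr ⟨A, hAin, hx⟩
        rw [hbu] at this
        obtain ⟨x, hx⟩ := hAne
        exact (mem_sdiff.mp (this hx)).2 hx
      · -- values agree
        intro M hM
        exact (Finset.mul_prod_erase M c (mem_filter.mp hM).2).symm
    rw [Finset.sum_congr rfl hfib]
    -- bound each inner sum by IH, and the degree sum by pmCount
    have hIH : ∀ A ∈ H'.filter (fun A => v0 ∈ A),
        ∑ M' ∈ pmSet (V' \ A) (H.filter (fun B => B ⊆ V' \ A)), ∏ B ∈ M', c B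
          ≤ (pmCount V H) ^ k := by
      intro A hA
      obtain ⟨hAH', _⟩ := mem_filter.mp hA
      obtain ⟨hAH, hAV'⟩ := mem_filter.mp hAH'
      have hcardsd : (V' \ A).card = r * k := by
        rw [Finset.card_sdiff_of_subset hAV', (hH A hAH).2, hcard, hk, Nat.mul_succ,
          Nat.add_sub_cancel]
      have hlt : r * k < n := by
        rw [hk]
        have h0r : 0 < r := by omega
        exact (Nat.mul_lt_mul_left h0r).mpr (Nat.lt_succ_self k)
      have := ih (r * k) hlt (V' \ A) ((Finset.sdiff_subset).trans hV'V) hcardsd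
      rwa [Nat.mul_div_cancel_left k (by omega : 0 < r)] at this
    calc ∑ A ∈ H'.filter (fun A => v0 ∈ A),
          c A * ∑ M' ∈ pmSet (V' \ A) (H.filter (fun B => B ⊆ V' \ A)), ∏ B ∈ M', c B
        ≤ ∑ A ∈ H'.filter (fun A => v0 ∈ A), c A * (pmCount V H) ^ k := by
          refine Finset.sum_le_sum fun A hA => Nat.mul_le_mul_left _ (hIH A hA)
      _ = (∑ A ∈ H'.filter (fun A => v0 ∈ A), c A) * (pmCount V H) ^ k := by
          rw [Finset.sum_mul]
      _ ≤ (pmCount V H) * (pmCount V H) ^ k := by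
          refine Nat.mul_le_mul_right _ ?_
          have hsub : H'.filter (fun A => v0 ∈ A) ⊆ H.filter (fun A => v0 ∈ A) :=
            Finset.filter_subset_filter _ (Finset.filter_subset _ _)
          calc ∑ A ∈ H'.filter (fun A => v0 ∈ A), c A
              ≤ ∑ A ∈ H.filter (fun A => v0 ∈ A), c A := Finset.sum_le_sum_of_subset hsub
            _ = pmCount V H := sum_c_eq (hV'V hv0)
      _ = (pmCount V H) ^ (n / r) := by
          rw [hk, Nat.mul_div_cancel_left _ (by omega : 0 < r), pow_succ, mul_comm]

/-- **Shearer's lemma for perfect matchings (Lemma 9).**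
`log Φ(H) ≤ r⁻¹ ∑_{v ∈ V} h(v,H)`. -/
theorem shearer_pm (r : ℕ) (hr : 2 ≤ r) (V : Finset ℕ) (hV : r ∣ V.card)
    (H : Finset (Finset ℕ)) (hH : ∀ A ∈ H, A ⊆ V ∧ A.card = r)
    (hpm : 0 < pmCount V H) :
    Real.log (pmCount V H) ≤ (1 / r) * ∑ v ∈ V, hEnt V H v := by
  classical
  have hr0 : 0 < r := by omega
  set N : ℕ := pmCount V H with hNdef
  set c : Finset ℕ → ℕ := fun A => ((pmSet V H).filter (fun M => A ∈ M)).card with hcdef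
  set m : ℕ := V.card / r with hmdef
  have hN0 : (0:ℝ) < (N:ℝ) := Nat.cast_pos.mpr hpm
  have hMcard : ∀ M ∈ pmSet V H, M.card = m := by
    intro M hM
    have h1 := pm_card (fun A hA => (hH A hA).2) hM
    rw [hmdef, ← h1, Nat.mul_div_cancel_left _ hr0]
  have hc_pos : ∀ M ∈ pmSet V H, ∀ A ∈ M, 0 < c A := fun M hM A hA =>
    Finset.card_pos.mpr ⟨M, mem_filter.mpr ⟨hM, hA⟩⟩
  have hfilterM : ∀ M ∈ pmSet V H, H.filter (fun A => A ∈ M) = M := by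
    intro M hM
    have hMH := (mem_pmSet.mp hM).1
    ext A
    simp only [mem_filter]
    exact ⟨fun h => h.2, fun h => ⟨hMH h, h⟩⟩
  -- Step A : rewrite the entropy sum
  have hA : ∑ v ∈ V, hEnt V H v = (r:ℝ) * ∑ A ∈ H, Real.negMulLog ((c A : ℝ) / N) := by
    rw [Finset.mul_sum]
    simp only [hEnt]
    calc ∑ v ∈ V, ∑ A ∈ H.filter (fun A => v ∈ A), Real.negMulLog ((c A : ℝ) / N)
        = ∑ v ∈ V, ∑ A ∈ H, if v ∈ A then Real.negMulLog ((c A : ℝ) / N) else 0 :=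
          Finset.sum_congr rfl fun v _ => Finset.sum_filter _ _
      _ = ∑ A ∈ H, ∑ v ∈ V, if v ∈ A then Real.negMulLog ((c A : ℝ) / N) else 0 :=
          Finset.sum_comm
      _ = ∑ A ∈ H, (r:ℝ) * Real.negMulLog ((c A : ℝ) / N) := by
          refine Finset.sum_congr rfl fun A hA => ?_
          rw [← Finset.sum_filter, Finset.sum_const, nsmul_eq_mul]
          have hVA : V.filter (fun v => v ∈ A) = A := by
            ext x
            simp only [mem_filter, and_iff_right_iff_imp]
            exact fun h => (hH A hA).1 h
          rw [hVA, (hH A hA).2]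
  -- Step B : total degree count
  have hsum_c : ∑ A ∈ H, c A = N * m := by
    calc ∑ A ∈ H, c A
        = ∑ A ∈ H, ∑ M ∈ pmSet V H, if A ∈ M then 1 else 0 :=
          Finset.sum_congr rfl fun A _ => Finset.card_filter _ _
      _ = ∑ M ∈ pmSet V H, ∑ A ∈ H, if A ∈ M then 1 else 0 := Finset.sum_comm
      _ = ∑ M ∈ pmSet V H, m := by
          refine Finset.sum_congr rfl fun M hM => ?_
          rw [← Finset.card_filter, hfilterM M hM, hMcard M hM]
      _ = N * m := by rw [Finset.sum_const, smul_eq_mul, hNdef]; rfl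
  -- Step C : swap the weighted log sum
  have hS : ∑ A ∈ H, (c A : ℝ) * Real.log (c A)
      = ∑ M ∈ pmSet V H, ∑ A ∈ M, Real.log (c A) := by
    calc ∑ A ∈ H, (c A : ℝ) * Real.log (c A)
        = ∑ A ∈ H, ∑ M ∈ pmSet V H, if A ∈ M then Real.log (c A) else 0 := by
          refine Finset.sum_congr rfl fun A _ => ?_
          rw [← Finset.sum_filter, Finset.sum_const, nsmul_eq_mul]
      _ = ∑ M ∈ pmSet V H, ∑ A ∈ H, if A ∈ M then Real.log (c A) else 0 := Finset.sum_comm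
      _ = ∑ M ∈ pmSet V H, ∑ A ∈ M, Real.log (c A) := by
          refine Finset.sum_congr rfl fun M hM => ?_
          rw [← Finset.sum_filter, hfilterM M hM]
  -- the counting bound
  have hD : ∑ M ∈ pmSet V H, ∏ A ∈ M, c A ≤ N ^ m := by
    have h1 := count_key r hr V H hH V.card V (subset_refl V) rfl
    rwa [Finset.filter_true_of_mem (fun A hA => (hH A hA).1)] at h1
  -- Step C' : per-matching log bound, summed
  have hC : ∑ M ∈ pmSet V H, ∑ A ∈ M, Real.log (c A)
      ≤ ((m:ℝ) * N - N) * Real.log N := by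
    have hNm : (0:ℝ) < (N:ℝ)^m := pow_pos hN0 m
    have h1 : ∀ M ∈ pmSet V H, ∑ A ∈ M, Real.log (c A)
        ≤ (m:ℝ) * Real.log N - Real.log N - 1
            + ((∏ A ∈ M, c A : ℕ):ℝ) * ((N:ℝ)/(N:ℝ)^m) := by
      intro M hM
      have hP : (0:ℝ) < ((∏ A ∈ M, c A : ℕ):ℝ) :=
        Nat.cast_pos.mpr (Finset.prod_pos (hc_pos M hM))
      have hx : (0:ℝ) < ((∏ A ∈ M, c A : ℕ):ℝ) * ((N:ℝ)/(N:ℝ)^m) :=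
        mul_pos hP (div_pos hN0 hNm)
      have h2 := Real.log_le_sub_one_of_pos hx
      rw [Real.log_mul hP.ne' (div_pos hN0 hNm).ne',
        Real.log_div hN0.ne' hNm.ne', Real.log_pow] at h2
      have h3 : Real.log ((∏ A ∈ M, c A : ℕ):ℝ) = ∑ A ∈ M, Real.log (c A) := by
        rw [Nat.cast_prod]
        exact Real.log_prod (fun A hA => Nat.cast_ne_zero.mpr (hc_pos M hM A hA).ne')
      rw [h3] at h2
      linarith
    have h2 := Finset.sum_le_sum h1
    rw [Finset.sum_add_distrib, Finset.sum_const, ← Finset.sum_mul] at h2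
    have hcN : ((pmSet V H).card : ℝ) = (N:ℝ) := by rw [hNdef]; rfl
    have h5 : ∑ M ∈ pmSet V H, ((∏ A ∈ M, c A : ℕ):ℝ) ≤ (N:ℝ)^m := by
      rw [← Nat.cast_sum, ← Nat.cast_pow]
      exact Nat.cast_le.mpr hD
    have h6 : (∑ M ∈ pmSet V H, ((∏ A ∈ M, c A : ℕ):ℝ)) * ((N:ℝ)/(N:ℝ)^m) ≤ (N:ℝ) := by
      calc (∑ M ∈ pmSet V H, ((∏ A ∈ M, c A : ℕ):ℝ)) * ((N:ℝ)/(N:ℝ)^m)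
          ≤ (N:ℝ)^m * ((N:ℝ)/(N:ℝ)^m) :=
            mul_le_mul_of_nonneg_right h5 (div_pos hN0 hNm).le
        _ = (N:ℝ) := by
            rw [mul_comm, div_mul_cancel₀ _ hNm.ne']
    rw [nsmul_eq_mul, hcN] at h2
    have h8 : (N:ℝ) * ((m:ℝ) * Real.log N - Real.log N - 1) + (N:ℝ)
        = ((m:ℝ) * N - N) * Real.log N := by ring
    linarith
  -- conclusion
  have key : Real.log N ≤ ∑ A ∈ H, Real.negMulLog ((c A : ℝ) / N) := by
    have hGeq : ∑ A ∈ H, Real.negMulLog ((c A : ℝ) / N)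
        = ∑ A ∈ H, ((c A : ℝ)/N) * (Real.log N - Real.log (c A)) := by
      refine Finset.sum_congr rfl fun A _ => ?_
      rcases Nat.eq_zero_or_pos (c A) with h | h
      · simp [h, Real.negMulLog]
      · have hca : (0:ℝ) < (c A : ℝ) := Nat.cast_pos.mpr h
        rw [Real.negMulLog, Real.log_div hca.ne' hN0.ne']
        ring
    have hsplit : ∑ A ∈ H, ((c A : ℝ)/N) * (Real.log N - Real.log (c A))
        = (1/(N:ℝ)) * ((∑ A ∈ H, (c A : ℝ)) * Real.log N
            - ∑ A ∈ H, (c A : ℝ) * Real.log (c A)) := by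
      rw [Finset.sum_mul, ← Finset.sum_sub_distrib, Finset.mul_sum]
      exact Finset.sum_congr rfl fun A _ => by ring
    have hcsum : (∑ A ∈ H, (c A : ℝ)) = (N:ℝ) * (m:ℝ) := by
      rw [← Nat.cast_sum, hsum_c, Nat.cast_mul]
    rw [hGeq, hsplit, hcsum, hS]
    have h9 : ((m:ℝ) * N - N) * Real.log N
        = (N:ℝ) * (m:ℝ) * Real.log N - (N:ℝ) * Real.log N := by ring
    have h10 : (N:ℝ) * Real.log N
        ≤ (N:ℝ) * (m:ℝ) * Real.log N - ∑ M ∈ pmSet V H, ∑ A ∈ M, Real.log (c A) := by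
      linarith
    calc Real.log N = (1/(N:ℝ)) * ((N:ℝ) * Real.log N) := by
          rw [one_div, ← mul_assoc, inv_mul_cancel₀ hN0.ne', one_mul]
      _ ≤ (1/(N:ℝ)) * ((N:ℝ) * (m:ℝ) * Real.log N
            - ∑ M ∈ pmSet V H, ∑ A ∈ M, Real.log (c A)) :=
          mul_le_mul_of_nonneg_left h10 (one_div_pos.mpr hN0).le
  rw [hA, ← mul_assoc]
  have hrr : (1/(r:ℝ)) * (r:ℝ) = 1 :=
    one_div_mul_cancel (Nat.cast_ne_zero.mpr hr0.ne')
  rw [hrr, one_mul]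
  exact key
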